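/- Let L be a complete modular lattice which is Artinian and radical free, i.e., the infimum of the set of all coatoms of L equals ⊥. Then L is Noetherian. -/

import Mathlib

/-- A monotone sequence bounded below by a coatom stabilizes. -/
lemma coatom_chain_stab {L : Type*} [CompleteLattice L] {m : L} (hm : IsCoatom m)
    (e : ℕ → L) (hmono : Monotone e) (hme : ∀ n, m ≤ e n) :
    ∃ N, ∀ n, N ≤ n → e N = e n := by
  by_cases h : ∃ n, e n = ⊤
  · obtain ⟨N, hN⟩ := h
    exact ⟨N, fun n hn => by
      have := hmono hn
      rw [hN] at this ⊢
      exact (top_le_iff.mp this).symm⟩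
  · push_neg at h
    refine ⟨0, fun n _ => ?_⟩
    have key : ∀ k, e k = m := by
      intro k
      rcases (hme k).lt_or_eq with hlt | heq
      · exact absurd (hm.2 _ hlt) (h k)
      · exact heq.symm
    rw [key 0, key n]

/-- Key induction: for any finite list of coatoms with infimum `c`, and any monotone
chain `a`, the chain `n ↦ a n ⊔ c` stabilizes. -/
lemma chain_sup_inf_stab {L : Type*} [CompleteLattice L] [IsModularLattice L] :
    ∀ (ms : List L), (∀ m ∈ ms, IsCoatom m) → ∀ (a : ℕ →o L),
      ∃ N, ∀ n, N ≤ n → a N ⊔ ms.foldr (· ⊓ ·) ⊤ = a n ⊔ ms.foldr (· ⊓ ·) ⊤ := by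
  intro ms
  induction ms with
  | nil => intro _ a; exact ⟨0, fun n _ => by simp⟩
  | cons m ms ih =>
    intro hco a
    have hm : IsCoatom m := hco m List.mem_cons_self
    set c : L := ms.foldr (· ⊓ ·) ⊤ with hc
    obtain ⟨N₁, hN₁⟩ := ih (fun x hx => hco x (List.mem_cons_of_mem m hx)) a
    -- the chain d n = (m ⊓ c) ⊔ (a n ⊓ c), living in [m ⊓ c, c]
    set d : ℕ → L := fun n => (m ⊓ c) ⊔ (a n ⊓ c) with hd
    have hdmono : Monotone d := fun i j hij =>
      sup_le_sup_left (inf_le_inf_right c (a.mono hij)) _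
    have hdc : ∀ n, d n ≤ c := fun n => sup_le inf_le_right inf_le_right
    have hdm : ∀ n, d n ⊓ m = m ⊓ c := by
      intro n
      apply le_antisymm
      · exact le_inf (inf_le_of_left_le (hdc n)) inf_le_right |>.trans
          (le_of_eq (inf_comm c m))
      · exact le_inf le_sup_left inf_le_left
    -- e n = d n ⊔ m stabilizes since m is a coatom
    obtain ⟨N₂, hN₂⟩ := coatom_chain_stab hm (fun n => d n ⊔ m)
      (fun i j hij => sup_le_sup_right (hdmono hij) m) (fun n => le_sup_right)
    have hdstab : ∀ n, N₂ ≤ n → d N₂ = d n := by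
      intro n hn
      refine eq_of_le_of_inf_le_of_sup_le (z := m) (hdmono hn) ?_ ?_
      · rw [hdm, hdm]
      · rw [← hN₂ n hn]
    refine ⟨max N₁ N₂, fun n hn => ?_⟩
    set N := max N₁ N₂
    have hN₁n : N₁ ≤ n := le_trans (le_max_left _ _) hn
    have hN₂n : N₂ ≤ n := le_trans (le_max_right _ _) hn
    have hfold : (List.foldr (· ⊓ ·) ⊤ (m :: ms) : L) = m ⊓ c := rfl
    rw [hfold]
    -- b k = a k ⊔ (m ⊓ c) ; show b N = b n using element c
    refine eq_of_le_of_inf_le_of_sup_le (z := c)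
      (sup_le_sup_right (a.mono hn) _) ?_ ?_
    · -- (a n ⊔ (m ⊓ c)) ⊓ c ≤ (a N ⊔ (m ⊓ c)) ⊓ c
      have hmod : ∀ k, (a k ⊔ (m ⊓ c)) ⊓ c = d k := by
        intro k
        rw [hd]
        rw [sup_comm (a k) (m ⊓ c), sup_inf_assoc_of_le (a k) (inf_le_right : m ⊓ c ≤ c)]
      rw [hmod, hmod]
      rw [← hdstab N (le_max_right _ _), hdstab n hN₂n]
    · -- (a n ⊔ (m ⊓ c)) ⊔ c ≤ (a N ⊔ (m ⊓ c)) ⊔ c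
      have hsups : ∀ k, (a k ⊔ (m ⊓ c)) ⊔ c = a k ⊔ c := by
        intro k
        rw [sup_assoc, sup_eq_right.mpr (inf_le_right : m ⊓ c ≤ c)]
      rw [hsups, hsups, ← hN₁ N (le_max_left _ _), hN₁ n hN₁n]

/-- A complete modular lattice that is Artinian and radical free (the infimum of all
coatoms is `⊥`) is Noetherian. -/
theorem stmt_6 {L : Type*} [CompleteLattice L] [IsModularLattice L]
    (hart : WellFounded ((· < ·) : L → L → Prop))
    (hrad : sInf {m : L | IsCoatom m} = ⊥) :
    WellFounded ((· > ·) : L → L → Prop) := by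
  -- First, find a finite list of coatoms whose infimum is ⊥.
  set S : Set L := {x | ∃ ms : List L, (∀ m ∈ ms, IsCoatom m) ∧ ms.foldr (· ⊓ ·) ⊤ = x}
    with hS
  have hne : S.Nonempty := ⟨⊤, [], by simp⟩
  obtain ⟨a, ⟨ms, hms, hfold⟩, hmin⟩ := hart.has_min S hne
  have habot : a = ⊥ := by
    have : a ≤ sInf {m : L | IsCoatom m} := by
      apply le_sInf
      intro m hm
      have hmem : a ⊓ m ∈ S := ⟨m :: ms, by
        refine ⟨fun x hx => ?_, ?_⟩
        · rcases List.mem_cons.mp hx with rfl | hx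
          · exact hm
          · exact hms x hx
        · show m ⊓ ms.foldr (· ⊓ ·) ⊤ = a ⊓ m
          rw [hfold, inf_comm]⟩
      have := hmin _ hmem
      have heq : a ⊓ m = a := by
        rcases (inf_le_left : a ⊓ m ≤ a).lt_or_eq with hlt | heq
        · exact absurd hlt this
        · exact heq
      rw [← heq]; exact inf_le_right
    rw [hrad] at this
    exact le_bot_iff.mp this
  refine ((wellFoundedGT_iff_monotone_chain_condition (α := L)).2 ?_).wf
  intro f
  obtain ⟨N, hN⟩ := chain_sup_inf_stab ms hms f
  rw [hfold, habot] at hN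
  exact ⟨N, fun n hn => by have := hN n hn; simpa using this⟩
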